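/- arXiv:1411.4728 — 2 statements merged into one kernel-verified Lean document; each statement's English description precedes it below -/
import Mathlib

section
/- A square-free positive integer n is a congruent number if and only if the elliptic curve E_n : n y^2 = x^3 - x has a rational point (x, y) with y ≠ 0. -/
/-- A positive integer `n` is a congruent number if it is the area of a right
triangle with rational side lengths. -/
def IsCongruentNumber (n : ℕ) : Prop :=
  ∃ a b c : ℚ, 0 < a ∧ 0 < b ∧ 0 < c ∧ a ^ 2 + b ^ 2 = c ^ 2 ∧ a * b / 2 = n

theorem congruent_iff_rational_point (n : ℕ) (hn : 0 < n) (hsq : Squarefree n) :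
    IsCongruentNumber n ↔
      ∃ x y : ℚ, y ≠ 0 ∧ (n : ℚ) * y ^ 2 = x ^ 3 - x := by
  have hn' : (0:ℚ) < n := by exact_mod_cast hn
  constructor
  · rintro ⟨a, b, c, ha, hb, hc, hpy, har⟩
    have hab : a * b = 2 * n := by linarith
    have hca : a < c := by nlinarith
    have hca' : c - a ≠ 0 := by linarith
    refine ⟨b / (c - a), 2 / (c - a), by positivity, ?_⟩
    field_simp
    linear_combination (-b) * hpy - 2 * (c - a) * hab
  · rintro ⟨x, y, hy, heq⟩
    have hy2 : (0:ℚ) < y ^ 2 := by positivity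
    have hx3 : (x ^ 2 - 1) * x = n * y ^ 2 := by linear_combination -heq
    have hx3pos : (0:ℚ) < (x ^ 2 - 1) * x := by rw [hx3]; positivity
    have hx : x ≠ 0 := by rintro rfl; simp at hx3pos
    have hx2 : x ^ 2 - 1 ≠ 0 := by
      intro h; rw [h] at hx3pos; simp at hx3pos
    have hyabs : (0:ℚ) < |y| := abs_pos.mpr hy
    refine ⟨|x ^ 2 - 1| / |y|, 2 * |x| / |y|, (x ^ 2 + 1) / |y|, ?_, ?_, ?_, ?_, ?_⟩
    · exact div_pos (abs_pos.mpr hx2) hyabs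
    · positivity
    · positivity
    · have h1 : |x ^ 2 - 1| ^ 2 = (x ^ 2 - 1) ^ 2 := sq_abs _
      have h2 : |x| ^ 2 = x ^ 2 := sq_abs _
      field_simp
      nlinarith [h1, h2]
    · have habs : |x ^ 2 - 1| * |x| = n * y ^ 2 := by
        rw [← abs_mul, hx3, abs_of_pos (by positivity)]
      have hyy : |y| * |y| = y ^ 2 := by rw [← sq, sq_abs]
      field_simp
      nlinarith [habs, hyy]
end

section
/- Let Q : D → ℤ be a function on the set D of positive divisors of a fixed square-free positive integer N with Q(1) = 1, and define L : D → ℤ by the recursion L(1) = 1 and L(n) = Q(n) - ∑ L(d₁)L(d₂), where the sum is over unordered factorizations n = d₁d₂ with d₁, d₂ > 1 coprime and d₂ ≡ 1 (mod 8). Then for every n ∈ D, L(n) ≡ ∑ ∏ᵢ Q(dᵢ) (mod 2), where the sum is over unordered factorizations n = d₀d₁⋯dₗ into pairwise coprime factors dᵢ > 1 with dᵢ ≡ 1 (mod 8) for all i ≥ 1. -/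
lemma mod8_iff (d : ℕ) : d % 8 = 1 ↔ (d : ZMod 8) = 1 := by
  constructor
  · intro h
    have : ((d % 8 : ℕ) : ZMod 8) = ((1:ℕ) : ZMod 8) := by rw [h]
    rwa [ZMod.natCast_mod, Nat.cast_one] at this
  · intro h
    have := congrArg ZMod.val h
    rwa [ZMod.val_natCast, ZMod.val_one'' (by norm_num)] at this

lemma prod_mod8_good (F : Finset ℕ) (h : ∀ d ∈ F, d % 8 = 1) : F.prod id % 8 = 1 := by
  rw [mod8_iff]
  push_cast
  calc ∏ d ∈ F, ((id d : ℕ) : ZMod 8) = ∏ _d ∈ F, (1 : ZMod 8) :=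
        Finset.prod_congr rfl (fun d hd => (mod8_iff d).mp (h d hd))
    _ = 1 := by simp

lemma prod_mod8_iff (F : Finset ℕ) (h : (F.filter (fun d => d % 8 ≠ 1)).card ≤ 1) :
    F.prod id % 8 = 1 ↔ F.filter (fun d => d % 8 ≠ 1) = ∅ := by
  rcases Nat.le_one_iff_eq_zero_or_eq_one.mp h with h0 | h1
  · have he : F.filter (fun d => d % 8 ≠ 1) = ∅ := Finset.card_eq_zero.mp h0
    have : ∀ d ∈ F, d % 8 = 1 := by
      intro d hd
      by_contra hb
      have : d ∈ F.filter (fun d => d % 8 ≠ 1) := Finset.mem_filter.mpr ⟨hd, hb⟩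
      simp [he] at this
    constructor
    · intro _; exact he
    · intro _; simpa using prod_mod8_good F this
  · obtain ⟨b, hb⟩ := Finset.card_eq_one.mp h1
    have hbF : b ∈ F ∧ b % 8 ≠ 1 := by
      have : b ∈ F.filter (fun d => d % 8 ≠ 1) := by rw [hb]; simp
      exact Finset.mem_filter.mp this
    have hsplit := Finset.prod_filter_mul_prod_filter_not F (fun d => d % 8 ≠ 1) id
    have hgood : (F.filter (fun d => ¬ d % 8 ≠ 1)).prod id % 8 = 1 :=
      prod_mod8_good _ (fun d hd => by simpa using (Finset.mem_filter.mp hd).2)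
    have hcast : ((F.prod id : ℕ) : ZMod 8) = (b : ZMod 8) := by
      rw [← hsplit, hb]
      push_cast
      rw [Finset.prod_singleton]
      have : (((F.filter (fun d => ¬ d % 8 ≠ 1)).prod id : ℕ) : ZMod 8) = 1 :=
        (mod8_iff _).mp hgood
      push_cast at this
      rw [this, mul_one]
      simp
    have hne : (b : ZMod 8) ≠ 1 := fun hc => hbF.2 ((mod8_iff b).mpr hc)
    constructor
    · intro hp
      exact absurd (hcast ▸ (mod8_iff _).mp hp) hne
    · intro he
      rw [he] at hb
      exact absurd hb.symm (Finset.singleton_ne_empty b)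

def Sset (n : ℕ) : Finset (Finset ℕ) :=
  (n.divisors.erase 1).powerset.filter (fun F => F.prod id = n ∧
    (∀ d ∈ F, ∀ e ∈ F, d ≠ e → Nat.Coprime d e) ∧
    (F.filter (fun d => d % 8 ≠ 1)).card ≤ 1)

lemma mem_Sset {n : ℕ} {F : Finset ℕ} : F ∈ Sset n ↔
    F ⊆ n.divisors.erase 1 ∧ F.prod id = n ∧
    (∀ d ∈ F, ∀ e ∈ F, d ≠ e → Nat.Coprime d e) ∧
    (F.filter (fun d => d % 8 ≠ 1)).card ≤ 1 := by
  simp only [Sset, Finset.mem_filter, Finset.mem_powerset, and_assoc]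

lemma mem_div_facts {n d : ℕ} (hd : d ∈ n.divisors.erase 1) : 1 < d ∧ d ∣ n := by
  rcases Finset.mem_erase.mp hd with ⟨h1, h2⟩
  rcases Nat.mem_divisors.mp h2 with ⟨h3, h4⟩
  have : 0 < d := Nat.pos_of_dvd_of_pos h3 (Nat.pos_of_ne_zero h4)
  exact ⟨by omega, h3⟩

lemma split_facts {n : ℕ} {H F : Finset ℕ} (hH : H ∈ Sset n) (hF : F ⊆ H) :
    F.prod id * (H \ F).prod id = n ∧ Nat.Coprime (F.prod id) ((H \ F).prod id) := by
  rcases mem_Sset.mp hH with ⟨hsub, hprod, hcop, _⟩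
  constructor
  · rw [← Finset.prod_union (Finset.disjoint_sdiff), Finset.union_sdiff_of_subset hF, hprod]
  · exact Nat.Coprime.prod_left fun f hf => Nat.Coprime.prod_right fun g hg =>
      hcop f (hF hf) g ((Finset.sdiff_subset) hg)
        (fun h => (Finset.mem_sdiff.mp hg).2 (h ▸ hf))

lemma sub_mem_Sset {n : ℕ} {H F : Finset ℕ} (hn : n ≠ 0) (hH : H ∈ Sset n) (hF : F ⊆ H) :
    F ∈ Sset (F.prod id) := by
  rcases mem_Sset.mp hH with ⟨hsub, hprod, hcop, hcard⟩
  have hdvdn : F.prod id ∣ n := ⟨(H \ F).prod id, (split_facts hH hF).1.symm⟩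
  have hne : F.prod id ≠ 0 := fun h => hn (by
    have := (split_facts hH hF).1; rw [h] at this; simpa using this.symm)
  refine mem_Sset.mpr ⟨?_, rfl, ?_, ?_⟩
  · intro d hd
    refine Finset.mem_erase.mpr ⟨(mem_div_facts (hsub (hF hd))).1.ne', ?_⟩
    exact Nat.mem_divisors.mpr ⟨Finset.dvd_prod_of_mem id hd, hne⟩
  · exact fun d hd e he hne' => hcop d (hF hd) e (hF he) hne'
  · exact le_trans (Finset.card_le_card (Finset.filter_subset_filter _ hF)) hcard

lemma exists_unique_pdvd {n : ℕ} (hn : 1 < n) {H : Finset ℕ} (hH : H ∈ Sset n) :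
    ∃! h, h ∈ H ∧ n.minFac ∣ h := by
  have hp : (n.minFac).Prime := Nat.minFac_prime (by omega)
  rcases mem_Sset.mp hH with ⟨hsub, hprod, hcop, _⟩
  have hdvd : n.minFac ∣ H.prod id := hprod ▸ Nat.minFac_dvd n
  obtain ⟨h, hh, hph⟩ := hp.prime.exists_mem_finset_dvd hdvd
  refine ⟨h, ⟨hh, hph⟩, ?_⟩
  rintro h' ⟨hh', hph'⟩
  by_contra hne
  have hcp := hcop h' hh' h hh hne
  have : n.minFac ∣ Nat.gcd h' h := Nat.dvd_gcd hph' hph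
  rw [hcp] at this
  exact Nat.Prime.one_lt hp |>.ne' (Nat.dvd_one.mp this)

lemma coprime_div_of_squarefree {n d : ℕ} (hsq : Squarefree n) (hd : d ∣ n) :
    Nat.Coprime d (n / d) := by
  have hmul : d * (n / d) = n := Nat.mul_div_cancel' hd
  have hdvd : Nat.gcd d (n / d) * Nat.gcd d (n / d) ∣ n := by
    calc Nat.gcd d (n/d) * Nat.gcd d (n/d) ∣ d * (n/d) :=
          mul_dvd_mul (Nat.gcd_dvd_left _ _) (Nat.gcd_dvd_right _ _)
      _ = n := hmul
  exact Nat.isUnit_iff.mp (hsq _ hdvd)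

def Pairs (n : ℕ) : Finset (Finset ℕ) :=
  (n.divisors.erase 1).powerset.filter (fun F => F.card = 2 ∧ F.prod id = n ∧
    (∀ d ∈ F, ∀ e ∈ F, d ≠ e → Nat.Coprime d e) ∧ ∃ d ∈ F, d % 8 = 1)

def Dn (n : ℕ) : Finset ℕ :=
  n.divisors.filter (fun d => 1 < d ∧ d < n ∧ n.minFac ∣ d ∧ (d % 8 = 1 ∨ (n/d) % 8 = 1))

lemma pair_decomp {n : ℕ} (hsq : Squarefree n) (hn : 1 < n) {P : Finset ℕ}
    (hP : P ∈ Pairs n) :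
    ∃ a b, P = {a, b} ∧ a ≠ b ∧ a * b = n ∧ 1 < a ∧ 1 < b ∧
      Nat.Coprime a b ∧ n.minFac ∣ a ∧ ¬ n.minFac ∣ b ∧ (a % 8 = 1 ∨ b % 8 = 1) ∧
      n / a = b := by
  have hp : (n.minFac).Prime := Nat.minFac_prime (by omega)
  simp only [Pairs, Finset.mem_filter, Finset.mem_powerset] at hP
  obtain ⟨hsub, hcard, hprod, hcop, hex⟩ := hP
  obtain ⟨x, y, hxy, rfl⟩ := Finset.card_eq_two.mp hcard
  have hx := mem_div_facts (hsub (by simp : x ∈ ({x, y} : Finset ℕ)))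
  have hy := mem_div_facts (hsub (by simp : y ∈ ({x, y} : Finset ℕ)))
  have hmul : x * y = n := by rwa [Finset.prod_pair hxy] at hprod
  have hcxy : Nat.Coprime x y := hcop x (by simp) y (by simp) hxy
  have h8 : x % 8 = 1 ∨ y % 8 = 1 := by
    obtain ⟨d, hd, hd8⟩ := hex
    rcases Finset.mem_insert.mp hd with h | h
    · exact Or.inl (h ▸ hd8)
    · exact Or.inr ((Finset.mem_singleton.mp h) ▸ hd8)
  have hpd : n.minFac ∣ x * y := hmul ▸ Nat.minFac_dvd n
  have key : ∀ a b : ℕ, 0 < a → a ≠ b → a * b = n → Nat.Coprime a b → n.minFac ∣ a →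
      ¬ n.minFac ∣ b ∧ n / a = b := by
    intro a b ha hne hab hc hpa
    constructor
    · intro hpb
      have hg : n.minFac ∣ Nat.gcd a b := Nat.dvd_gcd hpa hpb
      rw [hc] at hg
      exact hp.one_lt.ne' (Nat.dvd_one.mp hg)
    · rw [← hab]; exact Nat.mul_div_cancel_left b ha
  rcases (Nat.Prime.dvd_mul hp).mp hpd with h | h
  · obtain ⟨h1, h2⟩ := key x y (by omega) hxy hmul hcxy h
    exact ⟨x, y, rfl, hxy, hmul, hx.1, hy.1, hcxy, h, h1, h8, h2⟩
  · obtain ⟨h1, h2⟩ := key y x (by omega) hxy.symm (mul_comm x y ▸ hmul) hcxy.symm h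
    exact ⟨y, x, Finset.pair_comm x y, hxy.symm, mul_comm x y ▸ hmul, hy.1, hx.1,
      hcxy.symm, h, h1, h8.symm, h2⟩

lemma Dn_decomp {n : ℕ} (hsq : Squarefree n) (hn : 1 < n) {d : ℕ} (hd : d ∈ Dn n) :
    d * (n / d) = n ∧ 1 < n / d ∧ d ≠ n / d ∧ Nat.Coprime d (n / d) ∧
      ¬ n.minFac ∣ (n / d) ∧ d ∣ n := by
  have hp : (n.minFac).Prime := Nat.minFac_prime (by omega)
  simp only [Dn, Finset.mem_filter, Nat.mem_divisors] at hd
  obtain ⟨⟨hdvd, hn0⟩, h1, hlt, hpd, h8⟩ := hd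
  have hmul : d * (n / d) = n := Nat.mul_div_cancel' hdvd
  have he1 : 1 < n / d := by
    rcases Nat.lt_or_ge (n / d) 2 with h | h
    · interval_cases h' : (n / d) <;> omega
    · omega
  have hcop : Nat.Coprime d (n / d) := coprime_div_of_squarefree hsq hdvd
  have hne : d ≠ n / d := by
    intro h
    have : ¬ IsUnit d := by
      intro hu; rw [Nat.isUnit_iff] at hu; omega
    exact this (hsq d (by rw [← hmul, ← h]))
  have hnp : ¬ n.minFac ∣ (n / d) := by
    intro hc
    have hg : n.minFac ∣ Nat.gcd d (n / d) := Nat.dvd_gcd hpd hc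
    rw [hcop] at hg
    exact hp.one_lt.ne' (Nat.dvd_one.mp hg)
  exact ⟨hmul, he1, hne, hcop, hnp, hdvd⟩

lemma filter_pair_eq {p a b : ℕ} (hpa : p ∣ a) (hpb : ¬ p ∣ b) :
    ({a, b} : Finset ℕ).filter (fun x => p ∣ x) = {a} := by
  ext z
  simp only [Finset.mem_filter, Finset.mem_insert, Finset.mem_singleton]
  constructor
  · rintro ⟨h | h, hz⟩
    · exact h
    · exact absurd (h ▸ hz) hpb
  · rintro rfl
    exact ⟨Or.inl rfl, hpa⟩

lemma pairs_sum (L : ℕ → ℤ) {n : ℕ} (hsq : Squarefree n) (hn : 1 < n) :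
    ∑ P ∈ Pairs n, P.prod (fun d => L d) = ∑ d ∈ Dn n, L d * L (n / d) := by
  have hn0 : n ≠ 0 := by omega
  refine Finset.sum_nbij' (fun P => (P.filter (fun x => n.minFac ∣ x)).prod id)
    (fun d => {d, n / d}) ?_ ?_ ?_ ?_ ?_
  · intro P hP
    obtain ⟨a, b, rfl, hne, hab, ha1, hb1, hcab, hpa, hpb, h8, hdiv⟩ := pair_decomp hsq hn hP
    rw [filter_pair_eq hpa hpb, Finset.prod_singleton]
    simp only [Dn, Finset.mem_filter, Nat.mem_divisors]
    refine ⟨⟨⟨b, hab.symm⟩, hn0⟩, ha1, ?_, hpa, by simp only [id_eq]; rw [hdiv]; exact h8⟩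
    have : a < a * b := (lt_mul_iff_one_lt_right (show 0 < a by omega)).mpr hb1
    simp only [id_eq]
    omega
  · intro d hd
    obtain ⟨hmul, he1, hne, hcop, hnp, hdvd⟩ := Dn_decomp hsq hn hd
    simp only [Dn, Finset.mem_filter, Nat.mem_divisors] at hd
    obtain ⟨⟨_, _⟩, hd1, hlt, hpd, h8⟩ := hd
    simp only [Pairs, Finset.mem_filter, Finset.mem_powerset]
    refine ⟨?_, Finset.card_pair hne, by rw [Finset.prod_pair hne]; exact hmul, ?_, ?_⟩
    · intro z hz
      rcases Finset.mem_insert.mp hz with rfl | hz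
      · exact Finset.mem_erase.mpr ⟨by omega, Nat.mem_divisors.mpr ⟨hdvd, hn0⟩⟩
      · rw [Finset.mem_singleton.mp hz]
        exact Finset.mem_erase.mpr ⟨by omega, Nat.mem_divisors.mpr ⟨Nat.div_dvd_of_dvd hdvd, hn0⟩⟩
    · intro z hz w hw hzw
      rcases Finset.mem_insert.mp hz with rfl | hz <;>
        rcases Finset.mem_insert.mp hw with rfl | hw
      · omega
      · rw [Finset.mem_singleton.mp hw]; exact hcop
      · rw [Finset.mem_singleton.mp hz]; exact hcop.symm
      · rw [Finset.mem_singleton.mp hz, Finset.mem_singleton.mp hw] at hzw; omega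
    · rcases h8 with h | h
      · exact ⟨d, by simp, h⟩
      · exact ⟨n / d, by simp, h⟩
  · intro P hP
    obtain ⟨a, b, rfl, hne, hab, ha1, hb1, hcab, hpa, hpb, h8, hdiv⟩ := pair_decomp hsq hn hP
    rw [filter_pair_eq hpa hpb, Finset.prod_singleton]
    simp only [id_eq]
    rw [hdiv]
  · intro d hd
    obtain ⟨hmul, he1, hne, hcop, hnp, hdvd⟩ := Dn_decomp hsq hn hd
    simp only [Dn, Finset.mem_filter, Nat.mem_divisors] at hd
    rw [filter_pair_eq hd.2.2.2.1 hnp, Finset.prod_singleton]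
    simp only [id_eq]
  · intro P hP
    obtain ⟨a, b, rfl, hne, hab, ha1, hb1, hcab, hpa, hpb, h8, hdiv⟩ := pair_decomp hsq hn hP
    rw [filter_pair_eq hpa hpb, Finset.prod_singleton, Finset.prod_pair hne]
    simp only [id_eq]
    rw [hdiv]

lemma Sset_el_facts {m z : ℕ} {F : Finset ℕ} (hF : F ∈ Sset m) (hz : z ∈ F) :
    1 < z ∧ z ∣ m :=
  mem_div_facts ((mem_Sset.mp hF).1 hz)

lemma Sset_nonempty {m : ℕ} {F : Finset ℕ} (hm : 1 < m) (hF : F ∈ Sset m) : F.Nonempty := by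
  rcases Finset.eq_empty_or_nonempty F with rfl | h
  · have := (mem_Sset.mp hF).2.1
    simp at this
    omega
  · exact h

lemma FG_disjoint {n d : ℕ} (hsq : Squarefree n) (hn : 1 < n) (hdn : d ∣ n)
    {F G : Finset ℕ} (hF : F ∈ Sset d) (hG : G ∈ Sset (n / d)) : Disjoint F G := by
  rw [Finset.disjoint_left]
  intro z hzF hzG
  obtain ⟨hz1, hzd⟩ := Sset_el_facts hF hzF
  obtain ⟨_, hze⟩ := Sset_el_facts hG hzG
  have hcop := coprime_div_of_squarefree hsq hdn
  have : z ∣ Nat.gcd d (n / d) := Nat.dvd_gcd hzd hze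
  rw [hcop] at this
  have := Nat.dvd_one.mp this
  omega

lemma good_or_good {H F G : Finset ℕ} (hcard : (H.filter (fun d => d % 8 ≠ 1)).card ≤ 1)
    (hF : F ⊆ H) (hG : G ⊆ H) (hdisj : Disjoint F G) :
    (∀ z ∈ F, z % 8 = 1) ∨ (∀ z ∈ G, z % 8 = 1) := by
  by_contra hc
  push_neg at hc
  obtain ⟨⟨f, hf, hf8⟩, ⟨g, hg, hg8⟩⟩ := hc
  have hfg : f ≠ g := fun h => (Finset.disjoint_left.mp hdisj hf) (h ▸ hg)
  have h2 : 1 < (H.filter (fun d => d % 8 ≠ 1)).card :=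
    Finset.one_lt_card.mpr ⟨f, Finset.mem_filter.mpr ⟨hF hf, hf8⟩,
      g, Finset.mem_filter.mpr ⟨hG hg, hg8⟩, hfg⟩
  omega

lemma union_mem_S' {n d : ℕ} (hsq : Squarefree n) (hn : 1 < n) (hd : d ∈ Dn n)
    {F G : Finset ℕ} (hF : F ∈ Sset d) (hG : G ∈ Sset (n / d)) :
    F ∪ G ∈ (Sset n).filter (fun H => 2 ≤ H.card) := by
  have hn0 : n ≠ 0 := by omega
  obtain ⟨hmul, he1, hned, hcop, hnp, hdvd⟩ := Dn_decomp hsq hn hd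
  have hd1 : 1 < d := by
    simp only [Dn, Finset.mem_filter] at hd; exact hd.2.1
  obtain ⟨hFsub, hFprod, hFcop, hFcard⟩ := mem_Sset.mp hF
  obtain ⟨hGsub, hGprod, hGcop, hGcard⟩ := mem_Sset.mp hG
  have hdisj : Disjoint F G := FG_disjoint hsq hn hdvd hF hG
  have hprodU : (F ∪ G).prod id = n := by
    rw [Finset.prod_union hdisj, hFprod, hGprod, hmul]
  refine Finset.mem_filter.mpr ⟨mem_Sset.mpr ⟨?_, hprodU, ?_, ?_⟩, ?_⟩
  · intro z hz
    rcases Finset.mem_union.mp hz with h | h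
    · obtain ⟨hz1, hzd⟩ := Sset_el_facts hF h
      exact Finset.mem_erase.mpr ⟨by omega, Nat.mem_divisors.mpr ⟨hzd.trans hdvd, hn0⟩⟩
    · obtain ⟨hz1, hze⟩ := Sset_el_facts hG h
      exact Finset.mem_erase.mpr ⟨by omega,
        Nat.mem_divisors.mpr ⟨hze.trans (Nat.div_dvd_of_dvd hdvd), hn0⟩⟩
  · intro z hz w hw hzw
    rcases Finset.mem_union.mp hz with h1 | h1 <;> rcases Finset.mem_union.mp hw with h2 | h2
    · exact hFcop z h1 w h2 hzw
    · exact Nat.Coprime.coprime_dvd_left (Sset_el_facts hF h1).2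
        (Nat.Coprime.coprime_dvd_right (Sset_el_facts hG h2).2 hcop)
    · exact (Nat.Coprime.coprime_dvd_left (Sset_el_facts hF h2).2
        (Nat.Coprime.coprime_dvd_right (Sset_el_facts hG h1).2 hcop)).symm
    · exact hGcop z h1 w h2 hzw
  · rw [Finset.filter_union]
    refine le_trans (Finset.card_union_le _ _) ?_
    simp only [Dn, Finset.mem_filter] at hd
    rcases hd.2.2.2.2 with h8 | h8
    · have : F.filter (fun d => d % 8 ≠ 1) = ∅ := by
        rw [← prod_mod8_iff F hFcard, hFprod]; exact h8
      rw [this]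
      simpa using hGcard
    · have : G.filter (fun d => d % 8 ≠ 1) = ∅ := by
        rw [← prod_mod8_iff G hGcard, hGprod]; exact h8
      rw [this]
      simpa using hFcard
  · rw [Finset.card_union_of_disjoint hdisj]
    have h1 := Finset.card_pos.mpr (Sset_nonempty hd1 hF)
    have h2 := Finset.card_pos.mpr (Sset_nonempty he1 hG)
    omega

lemma mod2_cast_odd {c : ℕ} (hc : c % 2 = 1) : (c : ZMod 2) = 1 := by
  have h : ((c % 2 : ℕ) : ZMod 2) = (c : ZMod 2) := ZMod.natCast_mod c 2
  rw [← h, hc, Nat.cast_one]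

lemma fiber_forward {n : ℕ} (hsq : Squarefree n) (hn : 1 < n) {H : Finset ℕ}
    {d : ℕ} {F G : Finset ℕ}
    (hd : d ∈ Dn n) (hF : F ∈ Sset d) (hG : G ∈ Sset (n / d)) (hU : F ∪ G = H)
    {h₀ : ℕ} (huniq : ∀ y, y ∈ H ∧ n.minFac ∣ y → y = h₀) :
    h₀ ∈ F ∧ G = H \ F ∧ F ≠ H := by
  have hp : (n.minFac).Prime := Nat.minFac_prime (by omega)
  obtain ⟨hmul, he1, hned, hcop, hnp, hdvd⟩ := Dn_decomp hsq hn hd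
  have hpd : n.minFac ∣ d := by
    simp only [Dn, Finset.mem_filter] at hd; exact hd.2.2.2.1
  have hFprod : F.prod id = d := (mem_Sset.mp hF).2.1
  have hGprod : G.prod id = n / d := (mem_Sset.mp hG).2.1
  obtain ⟨f, hfF, hpf⟩ := hp.prime.exists_mem_finset_dvd (hFprod ▸ hpd)
  have hfH : f ∈ H := hU ▸ Finset.mem_union_left G hfF
  have hfh₀ : f = h₀ := huniq f ⟨hfH, hpf⟩
  have hh₀F : h₀ ∈ F := hfh₀ ▸ hfF
  have hdisj : Disjoint F G := FG_disjoint hsq hn hdvd hF hG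
  have hGH : G = H \ F := by rw [← hU, Finset.union_sdiff_cancel_left hdisj]
  refine ⟨hh₀F, hGH, ?_⟩
  intro hFH
  have : G = ∅ := by rw [hGH, hFH, Finset.sdiff_self]
  rw [this] at hGprod
  simp at hGprod
  omega

lemma fiber_backward {n : ℕ} (hsq : Squarefree n) (hn : 1 < n) {H : Finset ℕ}
    (hHS : H ∈ Sset n) {h₀ : ℕ} (hh₀H : h₀ ∈ H) (hph₀ : n.minFac ∣ h₀)
    {E : Finset ℕ} (hE : E ⊆ H.erase h₀) (hEne : E ≠ H.erase h₀) :
    (insert h₀ E).prod id ∈ Dn n ∧ (insert h₀ E) ∈ Sset ((insert h₀ E).prod id) ∧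
      (H \ insert h₀ E) ∈ Sset (n / (insert h₀ E).prod id) ∧
      insert h₀ E ∪ (H \ insert h₀ E) = H := by
  have hn0 : n ≠ 0 := by omega
  set F := insert h₀ E with hFdef
  set G := H \ F with hGdef
  have hFH : F ⊆ H := by
    intro z hz
    rcases Finset.mem_insert.mp hz with rfl | hz
    · exact hh₀H
    · exact Finset.erase_subset h₀ H (hE hz)
  have hUnion : F ∪ G = H := Finset.union_sdiff_of_subset hFH
  obtain ⟨hmulFG, hcopFG⟩ := split_facts hHS hFH
  set d := F.prod id with hddef
  have hdn : d ∣ n := ⟨(H \ F).prod id, hmulFG.symm⟩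
  have hd0 : 0 < d := Nat.pos_of_dvd_of_pos hdn (by omega)
  have hh₀1 : 1 < h₀ := (mem_div_facts ((mem_Sset.mp hHS).1 hh₀H)).1
  have hd1 : 1 < d := by
    have : h₀ ∣ d := Finset.dvd_prod_of_mem id (Finset.mem_insert_self h₀ E)
    have := Nat.le_of_dvd hd0 this
    omega
  -- G nonempty and prod G = n / d
  have hGne : G.Nonempty := by
    have hssub : E ⊂ H.erase h₀ := hE.ssubset_of_ne hEne
    obtain ⟨z, hzH, hzE⟩ := Finset.exists_of_ssubset hssub
    have hzh₀ : z ≠ h₀ := (Finset.mem_erase.mp hzH).1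
    refine ⟨z, Finset.mem_sdiff.mpr ⟨Finset.erase_subset h₀ H hzH, ?_⟩⟩
    intro hz
    rcases Finset.mem_insert.mp hz with h | h
    · exact hzh₀ h
    · exact hzE h
  have hGdvd : G.prod id ∣ n := ⟨d, by rw [← hmulFG, mul_comm]⟩
  have hG1 : 1 < G.prod id := by
    obtain ⟨z, hzG⟩ := hGne
    have hz1 : 1 < z := (mem_div_facts ((mem_Sset.mp hHS).1 (Finset.sdiff_subset hzG))).1
    have hzd : z ∣ G.prod id := Finset.dvd_prod_of_mem id hzG
    have h0 : 0 < G.prod id := Nat.pos_of_dvd_of_pos hGdvd (by omega)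
    have := Nat.le_of_dvd h0 hzd
    omega
  have hGeq : G.prod id = n / d := by
    rw [← hmulFG, Nat.mul_div_cancel_left _ hd0]
  have hdlt : d < n := by
    have h' : d < d * (H \ F).prod id := (lt_mul_iff_one_lt_right hd0).mpr hG1
    rwa [hmulFG] at h'
  have hpd : n.minFac ∣ d :=
    dvd_trans hph₀ (Finset.dvd_prod_of_mem id (Finset.mem_insert_self h₀ E))
  have hdisj : Disjoint F G := Finset.disjoint_sdiff
  -- mod 8 condition
  have h8 : d % 8 = 1 ∨ (n / d) % 8 = 1 := by
    have hHcard := (mem_Sset.mp hHS).2.2.2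
    rcases good_or_good hHcard hFH (Finset.sdiff_subset) hdisj with h | h
    · exact Or.inl (prod_mod8_good F h)
    · exact Or.inr (hGeq ▸ prod_mod8_good G h)
  have hdDn : d ∈ Dn n := by
    simp only [Dn, Finset.mem_filter, Nat.mem_divisors]
    exact ⟨⟨hdn, hn0⟩, hd1, hdlt, hpd, h8⟩
  have hFS : F ∈ Sset d := sub_mem_Sset hn0 hHS hFH
  have hGS : G ∈ Sset (n / d) := by
    have := sub_mem_Sset hn0 hHS (Finset.sdiff_subset : G ⊆ H)
    rwa [hGeq] at this
  exact ⟨hdDn, hFS, hGS, hUnion⟩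

lemma fiber_card_odd {n : ℕ} (hsq : Squarefree n) (hn : 1 < n) {H : Finset ℕ}
    (hHS : H ∈ Sset n) (hk : 2 ≤ H.card) :
    (((Dn n).sigma (fun d => (Sset d) ×ˢ (Sset (n / d)))).filter
       (fun x => x.2.1 ∪ x.2.2 = H)).card % 2 = 1 := by
  obtain ⟨h₀, ⟨hh₀H, hph₀⟩, huniq'⟩ := exists_unique_pdvd hn hHS
  have huniq : ∀ y, y ∈ H ∧ n.minFac ∣ y → y = h₀ := fun y hy => huniq' y hy
  have hcard : (((Dn n).sigma (fun d => (Sset d) ×ˢ (Sset (n / d)))).filter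
       (fun x => x.2.1 ∪ x.2.2 = H)).card
      = (((H.erase h₀).powerset).erase (H.erase h₀)).card := by
    refine Finset.card_nbij' (fun x => x.2.1.erase h₀)
      (fun E => ⟨(insert h₀ E).prod id, (insert h₀ E, H \ insert h₀ E)⟩) ?_ ?_ ?_ ?_
    · rintro ⟨d, F, G⟩ hx
      simp only [Finset.mem_coe, Finset.mem_filter, Finset.mem_sigma, Finset.mem_product] at hx
      obtain ⟨⟨hd, hF, hG⟩, hU⟩ := hx
      obtain ⟨hh₀F, hGH, hFH⟩ := fiber_forward hsq hn hd hF hG hU huniq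
      have hFsubH : F ⊆ H := by rw [← hU]; exact Finset.subset_union_left
      refine Finset.mem_erase.mpr ⟨?_,
        Finset.mem_powerset.mpr (Finset.erase_subset_erase h₀ hFsubH)⟩
      intro hEeq
      apply hFH
      have h' := congrArg (insert h₀) hEeq
      rwa [Finset.insert_erase hh₀F, Finset.insert_erase hh₀H] at h'
    · intro E hE
      obtain ⟨hEne, hEsub⟩ := Finset.mem_erase.mp hE
      have hEsub' := Finset.mem_powerset.mp hEsub
      obtain ⟨h1, h2, h3, h4⟩ := fiber_backward hsq hn hHS hh₀H hph₀ hEsub' hEne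
      simp only [Finset.mem_coe, Finset.mem_filter, Finset.mem_sigma, Finset.mem_product]
      exact ⟨⟨h1, h2, h3⟩, h4⟩
    · rintro ⟨d, F, G⟩ hx
      simp only [Finset.mem_coe, Finset.mem_filter, Finset.mem_sigma, Finset.mem_product] at hx
      obtain ⟨⟨hd, hF, hG⟩, hU⟩ := hx
      obtain ⟨hh₀F, hGH, hFH⟩ := fiber_forward hsq hn hd hF hG hU huniq
      dsimp only
      rw [Finset.insert_erase hh₀F, (mem_Sset.mp hF).2.1, ← hGH]
    · intro E hE
      obtain ⟨hEne, hEsub⟩ := Finset.mem_erase.mp hE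
      have hEsub' := Finset.mem_powerset.mp hEsub
      have hh₀E : h₀ ∉ E := fun h => (Finset.mem_erase.mp (hEsub' h)).1 rfl
      dsimp only
      exact Finset.erase_insert hh₀E
  rw [hcard]
  rw [Finset.card_erase_of_mem (Finset.mem_powerset_self _), Finset.card_powerset,
    Finset.card_erase_of_mem hh₀H]
  have hexp : H.card - 1 = (H.card - 2) + 1 := by omega
  rw [hexp, pow_succ]
  have hpos : 0 < 2 ^ (H.card - 2) := pow_pos (by norm_num) _
  omega

lemma core (q : ℕ → ZMod 2) {n : ℕ} (hsq : Squarefree n) (hn : 1 < n) :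
    ∑ d ∈ Dn n, (∑ F ∈ Sset d, F.prod q) * (∑ G ∈ Sset (n / d), G.prod q)
      = ∑ H ∈ (Sset n).filter (fun H => 2 ≤ H.card), H.prod q := by
  have step1 : ∑ d ∈ Dn n, (∑ F ∈ Sset d, F.prod q) * (∑ G ∈ Sset (n / d), G.prod q)
      = ∑ x ∈ (Dn n).sigma (fun d => (Sset d) ×ˢ (Sset (n / d))),
          (x.2.1 ∪ x.2.2).prod q := by
    rw [Finset.sum_sigma]
    refine Finset.sum_congr rfl (fun d hd => ?_)
    rw [Finset.sum_product, Finset.sum_mul_sum]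
    refine Finset.sum_congr rfl (fun F hF => Finset.sum_congr rfl (fun G hG => ?_))
    have hdvd : d ∣ n := by
      simp only [Dn, Finset.mem_filter, Nat.mem_divisors] at hd; exact hd.1.1
    exact (Finset.prod_union (FG_disjoint hsq hn hdvd hF hG)).symm
  rw [step1]
  have hmaps : ∀ x ∈ (Dn n).sigma (fun d => (Sset d) ×ˢ (Sset (n / d))),
      (x.2.1 ∪ x.2.2) ∈ (Sset n).filter (fun H => 2 ≤ H.card) := by
    rintro ⟨d, F, G⟩ hx
    simp only [Finset.mem_sigma, Finset.mem_product] at hx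
    exact union_mem_S' hsq hn hx.1 hx.2.1 hx.2.2
  rw [← Finset.sum_fiberwise_of_maps_to hmaps]
  refine Finset.sum_congr rfl (fun H hH => ?_)
  obtain ⟨hHS, hk⟩ := Finset.mem_filter.mp hH
  have hconst : ∑ x ∈ ((Dn n).sigma (fun d => (Sset d) ×ˢ (Sset (n / d)))).filter
        (fun x => x.2.1 ∪ x.2.2 = H), (x.2.1 ∪ x.2.2).prod q
      = (((Dn n).sigma (fun d => (Sset d) ×ˢ (Sset (n / d)))).filter
        (fun x => x.2.1 ∪ x.2.2 = H)).card • H.prod q := by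
    rw [Finset.sum_congr rfl (fun x hx => by rw [(Finset.mem_filter.mp hx).2]),
      Finset.sum_const]
  rw [hconst, nsmul_eq_mul, mod2_cast_odd (fiber_card_odd hsq hn hHS hk), one_mul]

lemma Sset_eq_insert {n : ℕ} (hn : 1 < n) :
    Sset n = insert {n} ((Sset n).filter (fun H => 2 ≤ H.card)) := by
  ext H
  simp only [Finset.mem_insert, Finset.mem_filter]
  constructor
  · intro h
    by_cases hc : 2 ≤ H.card
    · exact Or.inr ⟨h, hc⟩
    · left
      push_neg at hc
      have hprod := (mem_Sset.mp h).2.1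
      rcases Nat.le_one_iff_eq_zero_or_eq_one.mp (by omega : H.card ≤ 1) with h0 | h1
      · rw [Finset.card_eq_zero.mp h0] at hprod
        simp at hprod
        omega
      · obtain ⟨z, rfl⟩ := Finset.card_eq_one.mp h1
        rw [Finset.prod_singleton] at hprod
        simp only [id_eq] at hprod
        rw [hprod]
  · rintro (rfl | ⟨h, _⟩)
    · refine mem_Sset.mpr ⟨?_, by simp, ?_, ?_⟩
      · intro z hz
        rw [Finset.mem_singleton.mp hz]
        exact Finset.mem_erase.mpr ⟨by omega, Nat.mem_divisors.mpr ⟨dvd_rfl, by omega⟩⟩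
      · intro a ha b hb hab
        rw [Finset.mem_singleton.mp ha, Finset.mem_singleton.mp hb] at hab
        exact absurd rfl hab
      · exact le_trans (Finset.card_filter_le _ _) (by simp)
    · exact h

lemma singleton_not_mem {n : ℕ} :
    ({n} : Finset ℕ) ∉ (Sset n).filter (fun H => 2 ≤ H.card) := by
  intro h
  have h2 := (Finset.mem_filter.mp h).2
  rw [Finset.card_singleton] at h2
  omega

theorem mod_two_recursion (N : ℕ) (hN : 0 < N) (hsq : Squarefree N)
    (Q L : ℕ → ℤ) (hQ1 : Q 1 = 1) (hL1 : L 1 = 1)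
    (hrec : ∀ n, n ∣ N → 1 < n →
      L n = Q n - ∑ F ∈ (n.divisors.erase 1).powerset.filter
          (fun F => F.card = 2 ∧ F.prod id = n ∧
            (∀ d ∈ F, ∀ e ∈ F, d ≠ e → Nat.Coprime d e) ∧ ∃ d ∈ F, d % 8 = 1),
        F.prod (fun d => L d)) :
    ∀ n, n ∣ N → 1 < n →
      L n ≡ ∑ F ∈ (n.divisors.erase 1).powerset.filter
          (fun F => F.prod id = n ∧
            (∀ d ∈ F, ∀ e ∈ F, d ≠ e → Nat.Coprime d e) ∧
            (F.filter (fun d => d % 8 ≠ 1)).card ≤ 1),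
        F.prod (fun d => Q d) [ZMOD 2] := by
  intro n
  induction n using Nat.strong_induction_on with
  | _ n IH =>
  intro hdvd hlt
  have hsqn : Squarefree n := hsq.squarefree_of_dvd hdvd
  set q : ℕ → ZMod 2 := fun d => ((Q d : ℤ) : ZMod 2) with hq
  refine (ZMod.intCast_eq_intCast_iff _ _ 2).mp ?_
  have hgoal : ((∑ F ∈ (n.divisors.erase 1).powerset.filter
          (fun F => F.prod id = n ∧
            (∀ d ∈ F, ∀ e ∈ F, d ≠ e → Nat.Coprime d e) ∧
            (F.filter (fun d => d % 8 ≠ 1)).card ≤ 1),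
        F.prod (fun d => Q d) : ℤ) : ZMod 2) = ∑ F ∈ Sset n, F.prod q := by
    push_cast
    rfl
  rw [hgoal]
  -- recursive formula
  have h0 := hrec n hdvd hlt
  have hPairs : ((n.divisors.erase 1).powerset.filter
          (fun F => F.card = 2 ∧ F.prod id = n ∧
            (∀ d ∈ F, ∀ e ∈ F, d ≠ e → Nat.Coprime d e) ∧ ∃ d ∈ F, d % 8 = 1)) = Pairs n := rfl
  rw [hPairs, pairs_sum L hsqn hlt] at h0
  have h1 : ((L n : ℤ) : ZMod 2)
      = ((Q n : ℤ) : ZMod 2) + ∑ d ∈ Dn n, ((L d : ℤ) : ZMod 2) * ((L (n / d) : ℤ) : ZMod 2) := by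
    have := congrArg (fun z : ℤ => (z : ZMod 2)) h0
    push_cast at this
    rw [this, sub_eq_add_neg, ← Finset.sum_neg_distrib]
    congr 1
    refine Finset.sum_congr rfl (fun d hd => ?_)
    rw [CharTwo.neg_eq]
  -- apply IH
  have hIH : ∀ m, m < n → m ∣ N → 1 < m → ((L m : ℤ) : ZMod 2) = ∑ F ∈ Sset m, F.prod q := by
    intro m h1 h2 h3
    have h4 := (ZMod.intCast_eq_intCast_iff _ _ _).mpr (IH m h1 h2 h3)
    rw [h4]
    push_cast
    rfl
  have h2 : ∀ d ∈ Dn n, ((L d : ℤ) : ZMod 2) * ((L (n / d) : ℤ) : ZMod 2)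
      = (∑ F ∈ Sset d, F.prod q) * (∑ G ∈ Sset (n / d), G.prod q) := by
    intro d hd
    obtain ⟨hmul, he1, hned, hcop, hnp, hdn⟩ := Dn_decomp hsqn hlt hd
    have hd1 : 1 < d := by simp only [Dn, Finset.mem_filter] at hd; exact hd.2.1
    have hdltn : d < n := by simp only [Dn, Finset.mem_filter] at hd; exact hd.2.2.1
    have helt : n / d < n := Nat.div_lt_self (by omega) hd1
    rw [hIH d hdltn (hdn.trans hdvd) hd1,
      hIH (n / d) helt ((Nat.div_dvd_of_dvd hdn).trans hdvd) he1]
  rw [h1, Finset.sum_congr rfl h2, core q hsqn hlt]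
  -- final rearrangement
  conv_rhs => rw [Sset_eq_insert hlt]
  rw [Finset.sum_insert singleton_not_mem, Finset.prod_singleton]
end
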